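/- Let M, N ∈ ℂ^{n×n} and suppose β₀ ∈ ℂ is a simple root of χ(β) := det(M − βN), i.e. χ(β₀) = 0 and χ′(β₀) ≠ 0. Let x ∈ ℂ^n be a nonzero vector with (M − β₀N)x = 0 and let d ∈ ℂ^n satisfy dᵀx = 1. Then the (n+1)×(n+1) matrix J whose first n rows are [−Nx | M − β₀N] (first column −Nx, remaining n columns M − β₀N) and whose last row is [0 | dᵀ] is invertible. That is, the solution (β₀, x) of the system (M − βN)x = 0, dᵀx = 1 is a regular (nonsingular-Jacobian) solution. -/

import Mathlib

open Matrix Polynomial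

open Finset in
-- Finset version of derivative_prod
lemma derivative_finset_prod {R ι : Type*} [CommSemiring R] [DecidableEq ι]
    (s : Finset ι) (f : ι → R[X]) :
    derivative (∏ i ∈ s, f i) = ∑ i ∈ s, (∏ j ∈ s.erase i, f j) * derivative (f i) := by
  induction s using Finset.induction_on with
  | empty => simp
  | insert a s h ih =>
    rw [Finset.prod_insert h, derivative_mul, Finset.sum_insert h, ih, Finset.erase_insert h,
      Finset.mul_sum]
    congr 1
    · ring
    · apply Finset.sum_congr rfl
      intro i hi
      have hia : i ≠ a := fun e => h (e ▸ hi)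
      rw [Finset.erase_insert_of_ne hia.symm, Finset.prod_insert (fun ha => h (Finset.mem_of_mem_erase ha)), mul_assoc]

lemma sum_det_updateCol {n : ℕ} (A B : Matrix (Fin n) (Fin n) ℂ) :
    ∑ i, (A.updateCol i (fun k => B k i)).det = ∑ i, ∑ j, adjugate A i j * B j i := by
  refine Finset.sum_congr rfl fun i _ => ?_
  rw [← Matrix.cramer_apply, Matrix.cramer_eq_adjugate_mulVec]
  simp [Matrix.mulVec, dotProduct]

lemma deriv_det_eval_zero {n : ℕ} (A B : Matrix (Fin n) (Fin n) ℂ) :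
    (derivative ((A.map C + (X : ℂ[X]) • B.map C).det)).eval 0
      = ∑ i, ∑ j, adjugate A i j * B j i := by
  rw [← sum_det_updateCol]
  rw [det_apply', derivative_sum, eval_finset_sum]
  have key : ∀ σ : Equiv.Perm (Fin n),
      eval 0 (derivative (((Equiv.Perm.sign σ : ℤ) : ℂ[X]) *
        ∏ i, (A.map C + (X : ℂ[X]) • B.map C) (σ i) i))
      = ((Equiv.Perm.sign σ : ℤ) : ℂ) *
          ∑ i, (∏ j ∈ Finset.univ.erase i, A (σ j) j) * B (σ i) i := by
    intro σ
    have hent : ∀ i, (A.map C + (X : ℂ[X]) • B.map C) (σ i) i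
        = C (A (σ i) i) + X * C (B (σ i) i) := by
      intro i; simp [Matrix.map_apply]
    rw [derivative_mul]
    simp only [derivative_intCast, zero_mul, zero_add]
    rw [derivative_finset_prod, eval_mul, eval_intCast, eval_finset_sum]
    congr 1
    refine Finset.sum_congr rfl fun i _ => ?_
    rw [eval_mul]
    congr 1
    · rw [eval_prod]
      refine Finset.prod_congr rfl fun j _ => ?_
      rw [hent]; simp
    · rw [hent]
      simp
  simp only [key]
  simp only [Finset.mul_sum]
  rw [Finset.sum_comm]
  refine Finset.sum_congr rfl fun i _ => ?_
  rw [det_apply']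
  refine Finset.sum_congr rfl fun σ _ => ?_
  congr 1
  rw [← Finset.mul_prod_erase Finset.univ
    (fun j => (A.updateCol i fun k => B k i) (σ j) j) (Finset.mem_univ i), mul_comm]
  congr 1
  · simp [Matrix.updateCol_apply]
  · exact Finset.prod_congr rfl fun j hj => by
      simp [Matrix.updateCol_apply, Finset.ne_of_mem_erase hj]

lemma ker_span_aux {n : ℕ} (A : Matrix (Fin n) (Fin n) ℂ)
    (hP : adjugate A ≠ 0) {x : Fin n → ℂ} (hx : x ≠ 0) (hAx : A.mulVec x = 0)
    {y : Fin n → ℂ} (hAy : A.mulVec y = 0) : ∃ t : ℂ, y = t • x := by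
  obtain ⟨i, j, hij⟩ : ∃ i j, adjugate A i j ≠ 0 := by
    by_contra h
    push_neg at h
    exact hP (by ext i j; simp [h])
  rw [Matrix.adjugate_apply] at hij
  set B := A.updateRow j (Pi.single i 1) with hB
  have key : ∀ z : Fin n → ℂ, A.mulVec z = 0 → B.mulVec z = Pi.single j (z i) := by
    intro z hz
    funext k
    by_cases hk : k = j
    · subst hk
      simp [hB, Matrix.mulVec, dotProduct, Matrix.updateRow_self, Pi.single_apply]
    · have h0 := congrFun hz k
      simp only [Matrix.mulVec, dotProduct, Pi.zero_apply] at h0 ⊢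
      rw [Pi.single_eq_of_ne hk]
      rw [← h0]
      refine Finset.sum_congr rfl fun l _ => ?_
      rw [hB, Matrix.updateRow_ne hk]
  have hker : ∀ z : Fin n → ℂ, B.mulVec z = 0 → z = 0 := by
    intro z hz
    by_contra hzne
    exact hij ((Matrix.exists_mulVec_eq_zero_iff.mp ⟨z, hzne, hz⟩))
  have hxi : x i ≠ 0 := by
    intro h0
    apply hx
    apply hker
    rw [key x hAx, h0]
    simp
  have hu : B.mulVec (x i • y - y i • x) = 0 := by
    have : A.mulVec (x i • y - y i • x) = 0 := by
      rw [Matrix.mulVec_sub, Matrix.mulVec_smul, Matrix.mulVec_smul, hAx, hAy]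
      simp
    rw [key _ this]
    have : (x i • y - y i • x) i = 0 := by simp [mul_comm]
    rw [this]
    simp
  have := hker _ hu
  refine ⟨y i / x i, ?_⟩
  have hxy : x i • y = y i • x := by
    have := sub_eq_zero.mp this
    exact this
  funext k
  have := congrFun hxy k
  simp only [Pi.smul_apply, smul_eq_mul] at this ⊢
  field_simp
  linear_combination this

/-- For a simple generalized eigenvalue `β₀` of the pencil
`M − βN`, with right eigenvector `x` normalized by `dᵀx = 1`, the Jacobian
`J = [[−Nx, M − β₀N], [0, dᵀ]]` of the system `(M − βN)x = 0, dᵀx = 1` with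
respect to `(β, x)` is invertible (its first `n` rows are `[−Nx | M − β₀N]`
and its last row is `[0 | dᵀ]`). -/
theorem start_solution_regular_jacobian_invertible
    (n : ℕ) (M N : Matrix (Fin n) (Fin n) ℂ)
    (χ : Polynomial ℂ) (hχ : ∀ β : ℂ, χ.eval β = (M - β • N).det)
    (β₀ : ℂ) (hroot : χ.eval β₀ = 0)
    (hsimple : (derivative χ).eval β₀ ≠ 0)
    (x : Fin n → ℂ) (hx : x ≠ 0) (hMx : (M - β₀ • N).mulVec x = 0)
    (d : Fin n → ℂ) (hd : d ⬝ᵥ x = 1) :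
    IsUnit
      ((Matrix.fromBlocks
          (Matrix.of fun (i : Fin n) (_ : Fin 1) => -(N.mulVec x i))
          (M - β₀ • N)
          (0 : Matrix (Fin 1) (Fin 1) ℂ)
          (Matrix.of fun (_ : Fin 1) (j : Fin n) => d j)).submatrix
        ⇑(Equiv.sumComm (Fin 1) (Fin n)) id) := by
  classical
  set A := M - β₀ • N with hA
  have hdetA : A.det = 0 := by rw [← hχ β₀]; exact hroot
  set p : ℂ[X] := (A.map C + (X : ℂ[X]) • (-N).map C).det with hp
  have hev : ∀ t : ℂ, p.eval t = (M - (t + β₀) • N).det := by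
    intro t
    have h1 : p.eval t = ((A.map C + (X : ℂ[X]) • (-N).map C).map (evalRingHom t)).det :=
      RingHom.map_det (evalRingHom t) _
    rw [h1]
    congr 1
    ext i j
    simp [hA, Matrix.map_apply, Matrix.sub_apply, Matrix.smul_apply]
    ring
  have hcomp : χ.comp (X + Polynomial.C β₀) = p := by
    apply Polynomial.funext
    intro t
    rw [eval_comp]
    simp only [eval_add, eval_X, eval_C]
    rw [hχ, hev]
  have hder : (derivative χ).eval β₀ = (derivative p).eval 0 := by
    rw [← hcomp, derivative_comp]
    simp [eval_comp]
  have hS : ∑ i, ∑ j, adjugate A i j * N j i = -(derivative χ).eval β₀ := by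
    have h3 : eval 0 (derivative p) = ∑ i, ∑ j, adjugate A i j * (-N) j i :=
      deriv_det_eval_zero A (-N)
    rw [hder, h3]
    simp [Matrix.neg_apply, mul_neg]
  have hSne : (∑ i, ∑ j, adjugate A i j * N j i) ≠ 0 := by
    rw [hS]; exact neg_ne_zero.mpr hsimple
  have hPne : adjugate A ≠ 0 := by
    intro h; exact hSne (by simp [h])
  have hcolker : ∀ k, A.mulVec (fun i => adjugate A i k) = 0 := by
    intro k
    have hmz : A * adjugate A = 0 := by rw [Matrix.mul_adjugate, hdetA]; simp
    funext i
    have h3 := congrFun (congrFun hmz i) k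
    simpa [Matrix.mul_apply, Matrix.mulVec, dotProduct] using h3
  choose w hw using fun k => ker_span_aux A hPne hx hMx (hcolker k)
  have hPij : ∀ i k, adjugate A i k = w k * x i := fun i k => by
    have := congrFun (hw k) i; simpa using this
  obtain ⟨i₀, hxi₀⟩ : ∃ i, x i ≠ 0 := by
    by_contra h; push_neg at h; exact hx (funext h)
  have hmz2 : adjugate A * A = 0 := by rw [Matrix.adjugate_mul, hdetA]; simp
  have hwA : ∀ k, ∑ j, w j * A j k = 0 := by
    intro k
    have h4 := congrFun (congrFun hmz2 i₀) k
    simp only [Matrix.mul_apply, Matrix.zero_apply] at h4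
    have h5 : x i₀ * ∑ j, w j * A j k = 0 := by
      rw [Finset.mul_sum, ← h4]
      exact Finset.sum_congr rfl fun j _ => by rw [hPij]; ring
    rcases mul_eq_zero.mp h5 with h | h
    · exact absurd h hxi₀
    · exact h
  have hSw : (∑ i, ∑ j, adjugate A i j * N j i) = ∑ j, w j * N.mulVec x j := by
    rw [Finset.sum_comm]
    refine Finset.sum_congr rfl fun j _ => ?_
    simp only [Matrix.mulVec, dotProduct, Finset.mul_sum]
    refine Finset.sum_congr rfl fun i _ => by rw [hPij]; ring
  have hwNx : (∑ j, w j * N.mulVec x j) ≠ 0 := by rw [← hSw]; exact hSne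
  -- now show the Jacobian is invertible
  rw [Matrix.isUnit_iff_isUnit_det, isUnit_iff_ne_zero]
  intro hdet0
  obtain ⟨v, hvne, hv⟩ := Matrix.exists_mulVec_eq_zero_iff.mpr hdet0
  set c := v (Sum.inl 0) with hc
  set y : Fin n → ℂ := fun j => v (Sum.inr j) with hy
  have hrow1 : ∀ i : Fin n, A.mulVec y i = c * N.mulVec x i := by
    intro i
    have h1 := congrFun hv (Sum.inr i)
    simp only [Matrix.mulVec, dotProduct, Matrix.submatrix_apply, Equiv.sumComm_apply,
      Sum.swap_inr, Fintype.sum_sum_type, Matrix.fromBlocks_apply₁₁, Matrix.fromBlocks_apply₁₂,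
      Matrix.of_apply, id_eq, Pi.zero_apply, Finset.univ_unique, Finset.sum_singleton,
      Fin.default_eq_zero] at h1 ⊢
    linear_combination h1
  have hrowd : ∑ j, d j * y j = 0 := by
    have h1 := congrFun hv (Sum.inl 0)
    simp only [Matrix.mulVec, dotProduct, Matrix.submatrix_apply, Equiv.sumComm_apply,
      Sum.swap_inl, Fintype.sum_sum_type, Matrix.fromBlocks_apply₂₁, Matrix.fromBlocks_apply₂₂,
      Matrix.of_apply, id_eq, Pi.zero_apply, Matrix.zero_apply, zero_mul,
      Finset.univ_unique, Finset.sum_singleton, Fin.default_eq_zero, zero_add] at h1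
    linear_combination h1
  have hkey : ∑ k, w k * A.mulVec y k = ∑ j, (∑ k, w k * A k j) * y j := by
    simp only [Matrix.mulVec, dotProduct, Finset.mul_sum, Finset.sum_mul]
    rw [Finset.sum_comm]
    exact Finset.sum_congr rfl fun _ _ => Finset.sum_congr rfl fun _ _ => by ring
  have hcmul : c * (∑ j, w j * N.mulVec x j) = 0 := by
    have : c * (∑ j, w j * N.mulVec x j) = ∑ k, w k * A.mulVec y k := by
      rw [Finset.mul_sum]
      exact Finset.sum_congr rfl fun k _ => by rw [hrow1 k]; ring
    rw [this, hkey]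
    simp [hwA]
  have hc0 : c = 0 := by
    rcases mul_eq_zero.mp hcmul with h | h
    · exact h
    · exact absurd h hwNx
  have hAy : A.mulVec y = 0 := funext fun i => by rw [hrow1 i, hc0, zero_mul]; simp
  obtain ⟨t, ht⟩ := ker_span_aux A hPne hx hMx hAy
  have ht0 : t = 0 := by
    have h6 : ∑ j, d j * (t • x) j = t * (d ⬝ᵥ x) := by
      simp only [Pi.smul_apply, smul_eq_mul, dotProduct, Finset.mul_sum]
      exact Finset.sum_congr rfl fun j _ => by ring
    rw [ht, h6, hd, mul_one] at hrowd
    exact hrowd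
  have hy0 : y = 0 := by rw [ht, ht0]; simp
  apply hvne
  funext l
  cases l with
  | inl a =>
    have : a = 0 := Subsingleton.elim a 0
    rw [this]
    exact hc0
  | inr j => exact congrFun hy0 j
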